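/- arXiv:1811.06881 — 2 statements merged into one kernel-verified Lean document; each statement's English description precedes it below -/
import Mathlib

section
/- Let R be a commutative Noetherian ring, x_1,...,x_d a regular R-sequence in the Jacobson radical of R with (x_1,...,x_d)R prime, and let I be a squarefree monomial ideal. Then for each k ≥ 1, I^{(k)} = I^k if and only if Ass_R(R/I^k) ⊆ Ass_R(R/I). -/
open Ideal

namespace SP14

variable {R : Type*} [CommRing R]

/-- `a` is a nonzerodivisor modulo `J`. -/
def NZD (J : Ideal R) (a : R) : Prop := ∀ y, a * y ∈ J → y ∈ J

/-- Our bespoke notion of weakly regular sequence relative to a base ideal. -/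
def Wseq : Ideal R → List R → Prop
  | _, [] => True
  | J, a :: l => NZD J a ∧ Wseq (J ⊔ span {a}) l

theorem wseq_nil (J : Ideal R) : Wseq J ([] : List R) := trivial

theorem wseq_cons {J : Ideal R} {a : R} {l : List R} :
    Wseq J (a :: l) ↔ NZD J a ∧ Wseq (J ⊔ span {a}) l := Iff.rfl

/-- translate mathlib's weakly regular into `Wseq`. -/
theorem wseq_of_isWeaklyRegular :
    ∀ (l pre : List R), RingTheory.Sequence.IsWeaklyRegular R (pre ++ l) →
      Wseq (Ideal.ofList pre) l := by
  intro l
  induction l with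
  | nil => intro _ _; trivial
  | cons a l ih =>
    intro pre h
    constructor
    · -- NZD
      intro y hy
      have hlen : pre.length < (pre ++ a :: l).length := by
        simp [List.length_append]
      have hreg := h.regular_mod_prev pre.length hlen
      have htake : (pre ++ a :: l).take pre.length = pre := List.take_left
      have hget : (pre ++ a :: l)[pre.length] = a := by
        rw [List.getElem_append_right (le_refl _)]
        simp
      rw [htake, hget] at hreg
      -- hreg : IsSMulRegular (R ⧸ (ofList pre • ⊤)) a
      have h0 : (Submodule.Quotient.mk y : R ⧸ ((Ideal.ofList pre : Ideal R) • ⊤ : Submodule R R)) = 0 := by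
        apply hreg
        show a • (Submodule.Quotient.mk y : R ⧸ ((Ideal.ofList pre : Ideal R) • ⊤ : Submodule R R)) = a • 0
        rw [smul_zero, ← Submodule.Quotient.mk_smul, smul_eq_mul, Submodule.Quotient.mk_eq_zero,
          smul_eq_mul, mul_top]
        exact hy
      rwa [Submodule.Quotient.mk_eq_zero, smul_eq_mul, mul_top] at h0
    · have h' : RingTheory.Sequence.IsWeaklyRegular R ((pre ++ [a]) ++ l) := by
        rwa [List.append_assoc, List.singleton_append]
      have := ih (pre ++ [a]) h'
      rwa [Ideal.ofList_append, Ideal.ofList_singleton] at this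

theorem nzd_swap₁ [IsNoetherianRing R] {J : Ideal R} {a b : R}
    (ha : a ∈ jacobson (⊥ : Ideal R))
    (h1 : NZD J a) (h2 : NZD (J ⊔ span {a}) b) : NZD J b := by
  intro y hy
  -- K = colon ideal {c | c * b ∈ J} ; show K ≤ J via Nakayama in R ⧸ J
  set K : Ideal R := (J.colon (Submodule.span R {b})) with hK
  have hKmem : ∀ c, c ∈ K ↔ b * c ∈ J := by
    intro c
    rw [hK, Submodule.mem_colon_span_singleton, smul_eq_mul, mul_comm]
  have key : ∀ c ∈ K, ∃ t ∈ K, c - a * t ∈ J := by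
    intro c hc
    have hc' : c ∈ J ⊔ span {a} := by
      apply h2
      exact Submodule.mem_sup_left ((hKmem c).mp hc)
    obtain ⟨j, hj, z, hz, hjz⟩ := Submodule.mem_sup.mp hc'
    obtain ⟨t, ht⟩ := mem_span_singleton.mp hz
    have hbc : b * c ∈ J := (hKmem c).mp hc
    have : a * (b * t) ∈ J := by
      have : b * c = b * j + a * (b * t) := by rw [← hjz, ht]; ring
      rw [this] at hbc
      have := J.sub_mem hbc (J.mul_mem_left b hj)
      simpa using this
    have htK : b * t ∈ J := h1 _ this
    refine ⟨t, (hKmem t).mpr htK, ?_⟩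
    have : c - a * t = j := by rw [← hjz, ht]; ring
    rw [this]; exact hj
  -- Nakayama: image of K in R ⧸ J
  let q : R →ₗ[R] R ⧸ (J : Submodule R R) := Submodule.mkQ _
  set N : Submodule R (R ⧸ (J : Submodule R R)) := Submodule.map q K with hN
  have hNle : N ≤ (span {a} : Ideal R) • N := by
    rintro z hz
    obtain ⟨c, hc, rfl⟩ := hz
    obtain ⟨t, htK, hct⟩ := key c hc
    have : q c = a • q t := by
      show Submodule.Quotient.mk c = a • (Submodule.Quotient.mk t :
        R ⧸ (J : Submodule R R))
      rw [← Submodule.Quotient.mk_smul, Submodule.Quotient.eq]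
      simpa [smul_eq_mul] using hct
    rw [this]
    exact Submodule.smul_mem_smul (mem_span_singleton_self a) (Submodule.mem_map_of_mem htK)
  have hfg : N.FG := (IsNoetherian.noetherian K).map q
  have hjac' : (span {a} : Ideal R) ≤ jacobson ⊥ := by
    rw [span_le, Set.singleton_subset_iff]; exact ha
  have hN0 : N = ⊥ := Submodule.eq_bot_of_le_smul_of_le_jacobson_bot _ N hfg hNle hjac'
  have hyK : y ∈ K := (hKmem y).mpr hy
  have : q y ∈ N := Submodule.mem_map_of_mem hyK
  rw [hN0] at this
  have h0 : (Submodule.Quotient.mk y : R ⧸ (J : Submodule R R)) = 0 := this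
  rwa [Submodule.Quotient.mk_eq_zero] at h0

theorem nzd_swap₂ {J : Ideal R} {a b : R}
    (h1 : NZD J a) (h2 : NZD (J ⊔ span {a}) b) : NZD (J ⊔ span {b}) a := by
  intro c hc
  obtain ⟨j, hj, z, hz, hjz⟩ := Submodule.mem_sup.mp hc
  obtain ⟨t, ht⟩ := mem_span_singleton.mp hz
  have hbt : b * t ∈ J ⊔ span {a} := by
    have : b * t = a * c - j := by rw [← hjz, ht]; ring
    rw [this]
    exact Submodule.sub_mem _ (Submodule.mem_sup_right (mem_span_singleton.mpr ⟨c, rfl⟩))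
      (Submodule.mem_sup_left hj)
  have ht' : t ∈ J ⊔ span {a} := h2 _ hbt
  obtain ⟨j', hj', z', hz', hjz'⟩ := Submodule.mem_sup.mp ht'
  obtain ⟨u, hu⟩ := mem_span_singleton.mp hz'
  have : a * (c - b * u) ∈ J := by
    have heq : a * (c - b * u) = j + b * j' := by
      linear_combination -hjz + ht - b * hjz' + b * hu
    rw [heq]
    exact J.add_mem hj (J.mul_mem_left b hj')
  have := h1 _ this
  have hcy : c = (c - b * u) + b * u := by ring
  rw [hcy]
  exact Submodule.add_mem _ (Submodule.mem_sup_left this)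
    (Submodule.mem_sup_right (mem_span_singleton.mpr ⟨u, rfl⟩))

theorem wseq_swap [IsNoetherianRing R] {J : Ideal R} {a b : R} {l : List R}
    (ha : a ∈ jacobson (⊥ : Ideal R)) (h : Wseq J (a :: b :: l)) : Wseq J (b :: a :: l) := by
  obtain ⟨h1, h2, h3⟩ := h
  refine ⟨nzd_swap₁ ha h1 h2, nzd_swap₂ h1 h2, ?_⟩
  have : J ⊔ span {b} ⊔ span {a} = J ⊔ span {a} ⊔ span {b} := sup_right_comm _ _ _
  rwa [this]

theorem wseq_perm [IsNoetherianRing R] {l l' : List R} (h : l.Perm l')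
    (hjac : ∀ a ∈ l, a ∈ jacobson (⊥ : Ideal R)) : ∀ J : Ideal R, Wseq J l → Wseq J l' := by
  induction h with
  | nil => exact fun J h => h
  | cons c h ih =>
    intro J hw
    exact ⟨hw.1, ih (fun a hha => hjac a (List.mem_cons_of_mem _ hha)) _ hw.2⟩
  | swap c c' l =>
    intro J hw
    exact wseq_swap (hjac c' (by simp)) hw
  | trans h1 h2 ih1 ih2 =>
    intro J hw
    refine ih2 (fun a hha => hjac a (h1.mem_iff.mpr hha)) _ (ih1 hjac _ hw)

/-- Krull intersection for ideals in the Jacobson radical. -/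
theorem krull_inter [IsNoetherianRing R] {a : R} (ha : a ∈ jacobson (⊥ : Ideal R))
    {t : R} (h : ∀ n : ℕ, t ∈ (span {a} : Ideal R) ^ n) : t = 0 := by
  have hmem : t ∈ (⨅ i : ℕ, (span {a} : Ideal R) ^ i • ⊤ : Submodule R R) := by
    rw [Submodule.mem_iInf]
    intro i
    rw [smul_eq_mul, mul_top]
    exact h i
  obtain ⟨r, hr⟩ := (Ideal.mem_iInf_smul_pow_eq_bot_iff (span {a}) t).mp hmem
  have hrjac : (r : R) ∈ jacobson (⊥ : Ideal R) := by
    have : (span {a} : Ideal R) ≤ jacobson ⊥ := by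
      rw [span_le, Set.singleton_subset_iff]; exact ha
    exact this r.2
  have hunit : IsUnit (1 - (r : R)) := by
    have := Ideal.mem_jacobson_bot.mp hrjac (-1)
    have h1 : (r:R) * (-1) + 1 = 1 - (r:R) := by ring
    rwa [h1] at this
  have h0 : (1 - (r : R)) * t = 0 := by
    have : (r : R) • t = t := hr
    rw [smul_eq_mul] at this
    rw [sub_mul, one_mul, this, sub_self]
  obtain ⟨v, hv⟩ := hunit
  calc t = (v⁻¹ : Rˣ) * ((1 - (r : R)) * t) := by
        rw [← hv, ← mul_assoc, Units.inv_mul, one_mul]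
    _ = 0 := by rw [h0, mul_zero]

theorem pow_nzd {a : R} (h : NZD (⊥ : Ideal R) a) : ∀ (n : ℕ) (z : R), a ^ n * z = 0 → z = 0 := by
  intro n
  induction n with
  | zero => intro z hz; simpa using hz
  | succ n ih =>
    intro z hz
    have : a ^ n * (a * z) = 0 := by rw [← hz]; ring
    have := ih _ this
    simpa using h z (by simpa using this)

/-- The one-element case: if `a` is a NZD in the Jacobson radical and `(a)` is prime,
then `R` is a domain. -/
theorem bot_prime_of_single [IsNoetherianRing R] {a : R} (ha : a ∈ jacobson (⊥ : Ideal R))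
    (hreg : NZD (⊥ : Ideal R) a) (hp : (span {a} : Ideal R).IsPrime) :
    (⊥ : Ideal R).IsPrime := by
  constructor
  · intro h
    exact hp.ne_top (top_le_iff.mp (h ▸ bot_le : (⊤ : Ideal R) ≤ span {a}))
  · intro u v huv
    rw [Submodule.mem_bot] at huv
    by_contra hcon
    push_neg at hcon
    obtain ⟨hu, hv⟩ := hcon
    rw [Submodule.mem_bot] at hu hv
    have hfind : ∀ w : R, w ≠ 0 → ∃ m w', w = a ^ m * w' ∧ w' ∉ (span {a} : Ideal R) := by
      intro w hw
      classical
      have hex : ∃ n, w ∉ (span {a} : Ideal R) ^ n := by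
        by_contra hall
        push_neg at hall
        exact hw (krull_inter ha hall)
      have hn : w ∉ (span {a} : Ideal R) ^ (Nat.find hex) := Nat.find_spec hex
      have hn0 : Nat.find hex ≠ 0 := by
        intro h0
        rw [h0, pow_zero, Ideal.one_eq_top] at hn
        exact hn trivial
      obtain ⟨m, hm⟩ := Nat.exists_eq_succ_of_ne_zero hn0
      have hwm : w ∈ (span {a} : Ideal R) ^ m := by
        by_contra hc
        exact Nat.find_min hex (by omega : m < Nat.find hex) hc
      rw [span_singleton_pow, mem_span_singleton] at hwm
      obtain ⟨w', hw'⟩ := hwm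
      refine ⟨m, w', hw', ?_⟩
      intro hmem
      rw [mem_span_singleton] at hmem
      obtain ⟨w'', hw''⟩ := hmem
      apply hn
      rw [hm, span_singleton_pow, mem_span_singleton]
      exact ⟨w'', by rw [hw', hw'', pow_succ]; ring⟩

    obtain ⟨m, u', hu', hu'mem⟩ := hfind u hu
    obtain ⟨l, v', hv', hv'mem⟩ := hfind v hv
    have hzero : a ^ (m + l) * (u' * v') = 0 := by
      rw [← huv, hu', hv']; ring
    have h0 : u' * v' = 0 := pow_nzd hreg _ _ hzero
    have : u' * v' ∈ (span {a} : Ideal R) := by rw [h0]; exact Submodule.zero_mem _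
    rcases hp.mem_or_mem this with h | h
    · exact hu'mem h
    · exact hv'mem h

theorem jac_quot {K : Ideal R} {a : R} (h : a ∈ jacobson (⊥ : Ideal R)) :
    Ideal.Quotient.mk K a ∈ jacobson (⊥ : Ideal (R ⧸ K)) := by
  rw [Ideal.mem_jacobson_bot]
  intro y
  obtain ⟨z, rfl⟩ := Ideal.Quotient.mk_surjective y
  have : IsUnit (a * z + 1) := Ideal.mem_jacobson_bot.mp h z
  have := this.map (Ideal.Quotient.mk K)
  simpa using this

theorem nzd_quot {K J : Ideal R} (hK : K ≤ J) {a : R} (h : NZD J a) :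
    NZD (J.map (Ideal.Quotient.mk K)) (Ideal.Quotient.mk K a) := by
  intro z hz
  obtain ⟨y, rfl⟩ := Ideal.Quotient.mk_surjective z
  have h1 : Ideal.Quotient.mk K (a * y) ∈ J.map (Ideal.Quotient.mk K) := by
    simpa using hz
  rw [Ideal.mem_quotient_iff_mem_sup, sup_eq_left.mpr hK] at h1
  exact Ideal.mem_map_of_mem _ (h y h1)

theorem wseq_quot {K : Ideal R} :
    ∀ {l : List R} {J : Ideal R}, K ≤ J → Wseq J l →
      Wseq (J.map (Ideal.Quotient.mk K)) (l.map (Ideal.Quotient.mk K)) := by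
  intro l
  induction l with
  | nil => intro J _ _; trivial
  | cons a l ih =>
    intro J hK hw
    refine ⟨nzd_quot hK hw.1, ?_⟩
    have := ih (J := J ⊔ span {a}) (le_trans hK le_sup_left) hw.2
    rwa [Ideal.map_sup, Ideal.map_span, Set.image_singleton] at this

theorem bot_prime_of_wseq :
    ∀ (n : ℕ) (A : Type u) [CommRing A] [IsNoetherianRing A] (l : List A),
      l.length = n → (∀ a ∈ l, a ∈ jacobson (⊥ : Ideal A)) → Wseq (⊥ : Ideal A) l →
      (Ideal.ofList l).IsPrime → (⊥ : Ideal A).IsPrime := by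
  intro n
  induction n with
  | zero =>
    intro A _ _ l hl _ _ hp
    rw [List.length_eq_zero_iff] at hl
    subst hl
    rwa [Ideal.ofList_nil] at hp
  | succ n ih =>
    intro A _ _ l hl hjac hw hp
    match l, hl with
    | a :: l', hl =>
      have hsa : (span {a} : Ideal A) ≤ Ideal.ofList (a :: l') := by
        rw [Ideal.ofList_cons]; exact le_sup_left
      -- pass to A ⧸ (a)
      have hw' : Wseq (span {a} : Ideal A) l' := by
        have := hw.2
        rwa [bot_sup_eq] at this
      have hwq : Wseq (⊥ : Ideal (A ⧸ (span {a} : Ideal A))) (l'.map (Ideal.Quotient.mk _)) := by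
        have := wseq_quot (K := span {a}) (le_refl _) hw'
        rwa [Ideal.map_quotient_self] at this
      have hpq : (Ideal.ofList (l'.map (Ideal.Quotient.mk (span {a} : Ideal A)))).IsPrime := by
        rw [← Ideal.map_ofList]
        have heq : (Ideal.ofList l').map (Ideal.Quotient.mk (span {a} : Ideal A)) =
            (Ideal.ofList (a :: l')).map (Ideal.Quotient.mk (span {a} : Ideal A)) := by
          rw [Ideal.ofList_cons, Ideal.map_sup, Ideal.map_quotient_self, bot_sup_eq]
        rw [heq]
        exact Ideal.map_isPrime_of_surjective Ideal.Quotient.mk_surjective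
          (by rw [Ideal.mk_ker]; exact hsa)
      have hbq : (⊥ : Ideal (A ⧸ (span {a} : Ideal A))).IsPrime := by
        refine ih _ (l'.map (Ideal.Quotient.mk _)) (by simpa using hl) ?_ hwq hpq
        intro b hb
        rw [List.mem_map] at hb
        obtain ⟨c, hc, rfl⟩ := hb
        exact jac_quot (hjac c (List.mem_cons_of_mem _ hc))
      have hap : (span {a} : Ideal A).IsPrime := by
        have : (span {a} : Ideal A) = Ideal.comap (Ideal.Quotient.mk (span {a} : Ideal A)) ⊥ := by
          rw [← RingHom.ker_eq_comap_bot, Ideal.mk_ker]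
        rw [this]
        exact Ideal.IsPrime.comap _
      exact bot_prime_of_single (hjac a List.mem_cons_self) hw.1 hap

theorem wseq_append {J : Ideal R} :
    ∀ {l₁ l₂ : List R}, Wseq J (l₁ ++ l₂) → Wseq (J ⊔ Ideal.ofList l₁) l₂ := by
  suffices h : ∀ (l₁ : List R) (J : Ideal R) (l₂ : List R), Wseq J (l₁ ++ l₂) →
      Wseq (J ⊔ Ideal.ofList l₁) l₂ by
    intro l₁ l₂ hw; exact h l₁ J l₂ hw
  intro l₁
  induction l₁ with
  | nil =>
    intro J l₂ hw
    rwa [Ideal.ofList_nil, sup_bot_eq]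
  | cons a l₁ ih =>
    intro J l₂ hw
    have := ih (J ⊔ span {a}) l₂ hw.2
    rw [Ideal.ofList_cons, ← sup_assoc]
    exact this

variable {d : ℕ}

theorem perm_finRange (l : List (Fin d)) (hn : l.Nodup) (hm : ∀ i, i ∈ l) :
    l.Perm (List.finRange d) :=
  (List.perm_ext_iff_of_nodup hn (List.nodup_finRange d)).mpr
    (fun i => ⟨fun _ => List.mem_finRange i, fun _ => hm i⟩)

theorem ofList_map_toList (x : Fin d → R) (S : Finset (Fin d)) :
    Ideal.ofList ((S.toList).map x) = span (x '' ↑S) := by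
  unfold Ideal.ofList
  congr 1
  ext r
  simp [List.mem_map, Finset.mem_toList]

theorem wseq_split [IsNoetherianRing R] {x : Fin d → R}
    (hw : Wseq (⊥ : Ideal R) (List.ofFn x))
    (hjac : ∀ i, x i ∈ jacobson (⊥ : Ideal R))
    (S : Finset (Fin d)) (r : List (Fin d)) (hnd : (S.toList ++ r).Nodup)
    (hmm : ∀ i, i ∈ S.toList ++ r) : Wseq (span (x '' ↑S)) (r.map x) := by
  have hperm : (List.ofFn x).Perm ((S.toList ++ r).map x) := by
    have h1 : (S.toList ++ r).Perm (List.finRange d) := perm_finRange _ hnd hmm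
    rw [List.ofFn_eq_map]
    exact (h1.map x).symm
  have hjl : ∀ a ∈ List.ofFn x, a ∈ jacobson (⊥ : Ideal R) := by
    intro a ha
    rw [List.mem_ofFn] at ha
    obtain ⟨i, rfl⟩ := ha
    exact hjac i
  have hw2 := wseq_perm hperm hjl ⊥ hw
  rw [List.map_append] at hw2
  have := wseq_append hw2
  rwa [bot_sup_eq, ofList_map_toList] at this

theorem span_union_compl (x : Fin d → R) (S : Finset (Fin d)) :
    span (x '' ↑S) ⊔ span (x '' ↑Sᶜ) = span (Set.range x) := by
  rw [← Ideal.span_union, ← Set.image_union]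
  congr 1
  rw [← Set.image_univ]
  congr 1
  rw [Finset.coe_compl, Set.union_compl_self]

theorem PS_prime [IsNoetherianRing R] {x : Fin d → R}
    (hw : Wseq (⊥ : Ideal R) (List.ofFn x))
    (hjac : ∀ i, x i ∈ jacobson (⊥ : Ideal R))
    (hprime : (span (Set.range x)).IsPrime)
    (S : Finset (Fin d)) : (span (x '' ↑S) : Ideal R).IsPrime := by
  set P : Ideal R := span (x '' ↑S) with hP
  have hnd : (S.toList ++ Sᶜ.toList).Nodup := by
    refine List.Nodup.append (Finset.nodup_toList _) (Finset.nodup_toList _) ?_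
    intro i hi hi'
    rw [Finset.mem_toList] at hi hi'
    rw [Finset.mem_compl] at hi'
    exact hi' hi
  have hmm : ∀ i, i ∈ S.toList ++ Sᶜ.toList := by
    intro i
    rw [List.mem_append, Finset.mem_toList, Finset.mem_toList, Finset.mem_compl]
    exact (em _).imp id id
  have hwP := wseq_split hw hjac S Sᶜ.toList hnd hmm
  have hwq := wseq_quot (K := P) (le_refl P) hwP
  rw [Ideal.map_quotient_self] at hwq
  have hpq : (Ideal.ofList ((Sᶜ.toList.map x).map (Ideal.Quotient.mk P))).IsPrime := by
    rw [← Ideal.map_ofList, ofList_map_toList]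
    have h1 : (span (x '' ↑Sᶜ)).map (Ideal.Quotient.mk P) =
        (span (Set.range x)).map (Ideal.Quotient.mk P) := by
      conv_rhs => rw [← span_union_compl x S]
      rw [Ideal.map_sup, Ideal.map_quotient_self, bot_sup_eq]
    rw [h1]
    exact Ideal.map_isPrime_of_surjective Ideal.Quotient.mk_surjective
      (by rw [Ideal.mk_ker, hP]; exact span_mono (Set.image_subset_range x _))
  have hbq : (⊥ : Ideal (R ⧸ P)).IsPrime := by
    refine bot_prime_of_wseq _ _ ((Sᶜ.toList.map x).map (Ideal.Quotient.mk P)) rfl ?_ hwq hpq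
    intro b hb
    rw [List.mem_map] at hb
    obtain ⟨c, hc, rfl⟩ := hb
    rw [List.mem_map] at hc
    obtain ⟨i, _, rfl⟩ := hc
    exact jac_quot (hjac i)
  have : P = Ideal.comap (Ideal.Quotient.mk P) ⊥ := by
    rw [← RingHom.ker_eq_comap_bot, Ideal.mk_ker]
  rw [hP] at this ⊢
  rw [this]
  exact Ideal.IsPrime.comap _

theorem PS_not_mem [IsNoetherianRing R] {x : Fin d → R}
    (hw : Wseq (⊥ : Ideal R) (List.ofFn x))
    (hjac : ∀ i, x i ∈ jacobson (⊥ : Ideal R))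
    (hprime : (span (Set.range x)).IsPrime)
    (S : Finset (Fin d)) {j : Fin d} (hj : j ∉ S) : x j ∉ (span (x '' ↑S) : Ideal R) := by
  have hnd : (S.toList ++ j :: (Sᶜ.erase j).toList).Nodup := by
    refine List.Nodup.append (Finset.nodup_toList _) ?_ ?_
    · refine List.Nodup.cons ?_ (Finset.nodup_toList _)
      rw [Finset.mem_toList, Finset.mem_erase]
      intro h
      exact h.1 rfl
    · intro i hi hi'
      rw [Finset.mem_toList] at hi
      rcases List.mem_cons.mp hi' with h | h
      · subst h; exact hj hi
      · rw [Finset.mem_toList, Finset.mem_erase, Finset.mem_compl] at h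
        exact h.2 hi
  have hmm : ∀ i, i ∈ S.toList ++ j :: (Sᶜ.erase j).toList := by
    intro i
    rw [List.mem_append, Finset.mem_toList, List.mem_cons, Finset.mem_toList,
      Finset.mem_erase, Finset.mem_compl]
    by_cases h1 : i ∈ S
    · exact Or.inl h1
    · by_cases h2 : i = j
      · exact Or.inr (Or.inl h2)
      · exact Or.inr (Or.inr ⟨h2, h1⟩)
  have hwP := wseq_split hw hjac S _ hnd hmm
  rw [List.map_cons] at hwP
  have hnzd := hwP.1
  intro hmem
  have h1 : (1 : R) ∈ span (x '' ↑S) := hnzd 1 (by simpa using hmem)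
  exact (PS_prime hw hjac hprime S).ne_top ((Ideal.eq_top_iff_one _).mpr h1)

/-! ## Part II: squarefree monomial combinatorics -/

/-- `G` covers the set system `T`. -/
def Cov {d : ℕ} (T : Set (Finset (Fin d))) (G : Finset (Fin d)) : Prop :=
  ∀ s ∈ T, ∃ i ∈ s, i ∈ G

theorem prod_mem_PG {x : Fin d → R} {s G : Finset (Fin d)} {i₀ : Fin d}
    (hi₀ : i₀ ∈ s) (hiG : i₀ ∈ G) : (∏ i ∈ s, x i) ∈ span (x '' ↑G) := by
  rw [← Finset.mul_prod_erase s x hi₀]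
  exact Ideal.mul_mem_right _ _ (subset_span ⟨i₀, hiG, rfl⟩)

theorem I_le_PG {x : Fin d → R} {T : Set (Finset (Fin d))} {G : Finset (Fin d)}
    (h : Cov T G) : span ((fun s => ∏ i ∈ s, x i) '' T) ≤ span (x '' ↑G) := by
  rw [span_le]
  rintro _ ⟨s, hs, rfl⟩
  obtain ⟨i₀, hi₀, hiG⟩ := h s hs
  exact prod_mem_PG hi₀ hiG

universe u

theorem inter_le_I :
    ∀ (n : ℕ) (A : Type u) [CommRing A], ∀ (d : ℕ) (x : Fin d → A) (D : Finset (Fin d)),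
      D.card = n →
      (∀ S ⊆ D, (span (x '' ↑S)).IsPrime) →
      (∀ S ⊆ D, ∀ j ∈ D, j ∉ S → x j ∉ span (x '' ↑S)) →
      ∀ (T : Set (Finset (Fin d))), (∀ s ∈ T, s ⊆ D) →
      ∀ y : A, (∀ G ⊆ D, Cov T G → y ∈ span (x '' ↑G)) →
      y ∈ span ((fun s => ∏ i ∈ s, x i) '' T) := by
  intro n
  induction n with
  | zero =>
    intro A _ d x D hD hP hX T hT y hy
    by_cases h0 : ∅ ∈ T
    · have h1 : (1 : A) ∈ span ((fun s => ∏ i ∈ s, x i) '' T) :=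
        subset_span ⟨∅, h0, by simp⟩
      have htop : span ((fun s => ∏ i ∈ s, x i) '' T) = ⊤ := (Ideal.eq_top_iff_one _).mpr h1
      rw [htop]; trivial
    · rw [Finset.card_eq_zero] at hD
      subst hD
      have hT0 : T = ∅ := by
        ext s
        simp only [Set.mem_empty_iff_false, iff_false]
        intro hs
        have := hT s hs
        rw [Finset.subset_empty] at this
        subst this
        exact h0 hs
      have := hy ∅ (le_refl _) (by intro s hs; rw [hT0] at hs; exact absurd hs (Set.notMem_empty s))
      simp only [Finset.coe_empty, Set.image_empty, span_empty, Submodule.mem_bot] at this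
      rw [this]
      exact Submodule.zero_mem _
  | succ n ih =>
    intro A _ d x D hD hP hX T hT y hy
    by_cases h0 : ∅ ∈ T
    · have h1 : (1 : A) ∈ span ((fun s => ∏ i ∈ s, x i) '' T) :=
        subset_span ⟨∅, h0, by simp⟩
      have htop : span ((fun s => ∏ i ∈ s, x i) '' T) = ⊤ := (Ideal.eq_top_iff_one _).mpr h1
      rw [htop]; trivial
    obtain ⟨j, hjD⟩ : D.Nonempty := Finset.card_pos.mp (by omega)
    set Pj : Ideal A := span {x j} with hPj
    set mk := Ideal.Quotient.mk Pj with hmk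
    set x' : Fin d → A ⧸ Pj := fun i => mk (x i) with hx'
    set D' := D.erase j with hD'
    have hD'card : D'.card = n := by rw [hD', Finset.card_erase_of_mem hjD, hD]; rfl
    have key : ∀ S : Finset (Fin d),
        span (x' '' ↑S) = Ideal.map mk (span (x '' ↑(insert j S))) := by
      intro S
      have hj0 : mk (x j) = 0 := by
        rw [hmk, Ideal.Quotient.eq_zero_iff_mem, hPj]
        exact mem_span_singleton_self _
      have h2 : (span (insert (0 : A ⧸ Pj) (⇑mk '' (x '' ↑S))) : Ideal (A ⧸ Pj)) =
          span (⇑mk '' (x '' ↑S)) := Submodule.span_insert_zero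
      rw [Ideal.map_span, Finset.coe_insert, Set.image_insert_eq, Set.image_insert_eq, hj0, h2,
        Set.image_image]
    have hP' : ∀ S ⊆ D', (span (x' '' ↑S)).IsPrime := by
      intro S hS
      rw [key S]
      have hprime : (span (x '' ↑(insert j S))).IsPrime := by
        apply hP
        rw [Finset.insert_subset_iff]
        exact ⟨hjD, hS.trans (Finset.erase_subset _ _)⟩
      exact Ideal.map_isPrime_of_surjective Ideal.Quotient.mk_surjective
        (by rw [Ideal.mk_ker, hPj, span_le, Set.singleton_subset_iff]
            exact subset_span ⟨j, by simp, rfl⟩)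
    have hmemq : ∀ (S : Finset (Fin d)) (z : A),
        mk z ∈ span (x' '' ↑S) ↔ z ∈ span (x '' ↑(insert j S)) := by
      intro S z
      rw [key S, hmk, Ideal.mem_quotient_iff_mem_sup, sup_eq_left.mpr]
      rw [hPj, span_le, Set.singleton_subset_iff]
      exact subset_span ⟨j, by simp, rfl⟩
    have hX' : ∀ S ⊆ D', ∀ i ∈ D', i ∉ S → x' i ∉ span (x' '' ↑S) := by
      intro S hS i hiD' hiS hmem
      rw [hx'] at hmem
      rw [hmemq S (x i)] at hmem
      refine hX (insert j S) ?_ i ?_ ?_ hmem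
      · rw [Finset.insert_subset_iff]
        exact ⟨hjD, hS.trans (Finset.erase_subset _ _)⟩
      · exact Finset.mem_of_mem_erase hiD'
      · rw [Finset.mem_insert]
        push_neg
        exact ⟨Finset.ne_of_mem_erase hiD', hiS⟩
    set T₀ : Set (Finset (Fin d)) := {s | s ∈ T ∧ j ∉ s} with hT₀
    have hT₀D' : ∀ s ∈ T₀, s ⊆ D' := by
      rintro s ⟨hs, hjs⟩
      rw [hD', Finset.subset_erase]
      exact ⟨hT s hs, hjs⟩
    have hcov0 : ∀ G ⊆ D', Cov T₀ G → mk y ∈ span (x' '' ↑G) := by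
      intro G hG hcov
      rw [hmemq G y]
      apply hy (insert j G)
      · rw [Finset.insert_subset_iff]
        exact ⟨hjD, hG.trans (Finset.erase_subset _ _)⟩
      · intro s hs
        by_cases hjs : j ∈ s
        · exact ⟨j, hjs, Finset.mem_insert_self _ _⟩
        · obtain ⟨i, his, hiG⟩ := hcov s ⟨hs, hjs⟩
          exact ⟨i, his, Finset.mem_insert_of_mem hiG⟩
    have hIH1 : mk y ∈ span ((fun s => ∏ i ∈ s, x' i) '' T₀) :=
      ih (A ⧸ Pj) d x' D' hD'card hP' hX' T₀ hT₀D' (mk y) hcov0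
    have himg : (fun s => ∏ i ∈ s, x' i) '' T₀ = mk '' ((fun s => ∏ i ∈ s, x i) '' T₀) := by
      rw [Set.image_image]
      apply Set.image_congr
      intro s _
      rw [hx', map_prod]
    have hy2 : y ∈ span ((fun s => ∏ i ∈ s, x i) '' T₀) ⊔ Pj := by
      rw [himg, ← Ideal.map_span] at hIH1
      exact Ideal.mem_quotient_iff_mem_sup.mp hIH1
    obtain ⟨aa, haa, z, hz, hsum⟩ := Submodule.mem_sup.mp hy2
    obtain ⟨b, hb⟩ := mem_span_singleton.mp hz
    set Tbar : Set (Finset (Fin d)) := (fun s => s.erase j) '' T with hTbar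
    have hbG : ∀ G ⊆ D', Cov Tbar G → b ∈ span (x '' ↑G) := by
      intro G hG hcov
      have hGD : G ⊆ D := hG.trans (Finset.erase_subset _ _)
      have hcovT : Cov T G := by
        intro s hs
        obtain ⟨i, hi, hiG⟩ := hcov (s.erase j) ⟨s, hs, rfl⟩
        exact ⟨i, Finset.mem_of_mem_erase hi, hiG⟩
      have hyG : y ∈ span (x '' ↑G) := hy G hGD hcovT
      have haaG : aa ∈ span (x '' ↑G) := by
        have hcov0' : Cov T₀ G := by
          rintro s ⟨hs, hjs⟩
          obtain ⟨i, hi, hiG⟩ := hcov (s.erase j) ⟨s, hs, rfl⟩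
          rw [Finset.erase_eq_of_notMem hjs] at hi
          exact ⟨i, hi, hiG⟩
        exact I_le_PG hcov0' haa
      have hxjb : x j * b ∈ span (x '' ↑G) := by
        have : x j * b = y - aa := by rw [← hsum, hb]; ring
        rw [this]
        exact Submodule.sub_mem _ hyG haaG
      have hxj : x j ∉ span (x '' ↑G) := by
        apply hX G hGD j hjD
        intro hjG
        exact Finset.notMem_erase j D (hG hjG)
      rcases (hP G hGD).mem_or_mem hxjb with h | h
      · exact absurd h hxj
      · exact h
    have hTbarD' : ∀ s ∈ Tbar, s ⊆ D' := by
      rintro _ ⟨s, hs, rfl⟩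
      rw [hD']
      exact Finset.erase_subset_erase _ (hT s hs)
    have hbI : b ∈ span ((fun s => ∏ i ∈ s, x i) '' Tbar) :=
      ih A d x D' hD'card
        (fun S hS => hP S (hS.trans (Finset.erase_subset _ _)))
        (fun S hS i hi hiS => hX S (hS.trans (Finset.erase_subset _ _)) i
          (Finset.mem_of_mem_erase hi) hiS)
        Tbar hTbarD' b hbG
    have hmul : ∀ c, c ∈ span ((fun s => ∏ i ∈ s, x i) '' Tbar) →
        x j * c ∈ span ((fun s => ∏ i ∈ s, x i) '' T) := by
      intro c hc
      induction hc using Submodule.span_induction with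
      | mem g hg =>
        obtain ⟨t, ht, rfl⟩ := hg
        obtain ⟨s, hs, rfl⟩ := ht
        show x j * ∏ i ∈ s.erase j, x i ∈ _
        by_cases hjs : j ∈ s
        · rw [Finset.mul_prod_erase s x hjs]
          exact subset_span ⟨s, hs, rfl⟩
        · rw [Finset.erase_eq_of_notMem hjs]
          exact Ideal.mul_mem_left _ _ (subset_span ⟨s, hs, rfl⟩)
      | zero => rw [mul_zero]; exact Submodule.zero_mem _
      | add u v hu hv hu' hv' => rw [mul_add]; exact Submodule.add_mem _ hu' hv'
      | smul r u hu hu' =>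
        rw [smul_eq_mul, mul_comm r u, ← mul_assoc]
        exact Ideal.mul_mem_right _ _ hu'
    have hxb : x j * b ∈ span ((fun s => ∏ i ∈ s, x i) '' T) := hmul b hbI
    have hyfin : y = aa + x j * b := by rw [← hsum, hb]
    rw [hyfin]
    refine Submodule.add_mem _ ?_ hxb
    have : T₀ ⊆ T := fun s hs => hs.1
    exact span_mono (Set.image_mono this) haa

/-- Minimal covers. -/
def MinCov {d : ℕ} (T : Set (Finset (Fin d))) (F : Finset (Fin d)) : Prop :=
  Cov T F ∧ ∀ G ⊆ F, Cov T G → G = F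

theorem exists_minCov {T : Set (Finset (Fin d))} {G : Finset (Fin d)} (hG : Cov T G) :
    ∃ F ⊆ G, MinCov T F := by
  induction G using Finset.strongInductionOn with
  | _ G ih =>
    by_cases h : ∀ G' ⊆ G, Cov T G' → G' = G
    · exact ⟨G, subset_rfl, hG, h⟩
    · push_neg at h
      obtain ⟨G', hsub, hcov, hne⟩ := h
      obtain ⟨F, hF, hmin⟩ := ih G' (Finset.ssubset_iff_subset_ne.mpr ⟨hsub, hne⟩) hcov
      exact ⟨F, hF.trans hsub, hmin⟩

section CoverPrimes

variable {x : Fin d → R} {T : Set (Finset (Fin d))}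

theorem PF_subset_of_le (hX : ∀ (S : Finset (Fin d)) (j), j ∉ S → x j ∉ span (x '' ↑S))
    {F G : Finset (Fin d)} (h : ∀ i ∈ F, x i ∈ span (x '' ↑G)) : F ⊆ G := by
  intro i hi
  by_contra hiG
  exact hX G i hiG (h i hi)

theorem mem_I_of_forall_minCov
    (hP : ∀ S : Finset (Fin d), (span (x '' ↑S) : Ideal R).IsPrime)
    (hX : ∀ (S : Finset (Fin d)) (j), j ∉ S → x j ∉ span (x '' ↑S))
    {y : R} (hy : ∀ F, MinCov T F → y ∈ span (x '' ↑F)) :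
    y ∈ span ((fun s => ∏ i ∈ s, x i) '' T) := by
  refine inter_le_I (Finset.univ : Finset (Fin d)).card R d x Finset.univ rfl
    (fun S _ => hP S) (fun S _ j _ hj => hX S j hj) T (fun s _ => Finset.subset_univ s) y ?_
  intro G _ hcov
  obtain ⟨F, hFG, hF⟩ := exists_minCov hcov
  exact span_mono (Set.image_mono (by exact_mod_cast hFG)) (hy F hF)

theorem exists_minCov_le_of_prime
    {q : Ideal R} (hq : q.IsPrime) (hIq : span ((fun s => ∏ i ∈ s, x i) '' T) ≤ q) :
    ∃ F, MinCov T F ∧ span (x '' ↑F) ≤ q := by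
  classical
  set G : Finset (Fin d) := Finset.univ.filter (fun i => x i ∈ q) with hG
  have hcov : Cov T G := by
    intro s hs
    have hms : (∏ i ∈ s, x i) ∈ q := hIq (subset_span ⟨s, hs, rfl⟩)
    obtain ⟨i, his, hxi⟩ := (Ideal.IsPrime.prod_mem_iff (hp := hq)).mp hms
    exact ⟨i, his, by rw [hG, Finset.mem_filter]; exact ⟨Finset.mem_univ _, hxi⟩⟩
  have hGq : span (x '' ↑G) ≤ q := by
    rw [span_le]
    rintro _ ⟨i, hiG, rfl⟩
    rw [hG] at hiG
    simp only [Finset.coe_filter, Finset.mem_univ, true_and, Set.mem_setOf_eq] at hiG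
    exact hiG
  obtain ⟨F, hFG, hF⟩ := exists_minCov hcov
  exact ⟨F, hF, le_trans (span_mono (Set.image_mono (by exact_mod_cast hFG))) hGq⟩

theorem minCov_minimalPrimes
    (hP : ∀ S : Finset (Fin d), (span (x '' ↑S) : Ideal R).IsPrime)
    (hX : ∀ (S : Finset (Fin d)) (j), j ∉ S → x j ∉ span (x '' ↑S))
    {F : Finset (Fin d)} (hF : MinCov T F) :
    span (x '' ↑F) ∈ (span ((fun s => ∏ i ∈ s, x i) '' T) : Ideal R).minimalPrimes := by
  constructor
  · exact ⟨hP F, I_le_PG hF.1⟩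
  · rintro q ⟨hqp, hIq⟩ hle
    obtain ⟨F', hF', hleq⟩ := exists_minCov_le_of_prime hqp hIq
    have hsub : F' ⊆ F := by
      apply PF_subset_of_le hX
      intro i hi
      exact hle (hleq (subset_span ⟨i, hi, rfl⟩))
    have : F' = F := hF.2 F' hsub hF'.1
    subst this
    exact hleq

theorem minimalPrimes_eq_minCov
    (hP : ∀ S : Finset (Fin d), (span (x '' ↑S) : Ideal R).IsPrime)
    (hX : ∀ (S : Finset (Fin d)) (j), j ∉ S → x j ∉ span (x '' ↑S))
    {q : Ideal R} (hq : q ∈ (span ((fun s => ∏ i ∈ s, x i) '' T) : Ideal R).minimalPrimes) :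
    ∃ F, MinCov T F ∧ q = span (x '' ↑F) := by
  obtain ⟨F, hF, hle⟩ := exists_minCov_le_of_prime hq.1.1 hq.1.2
  have h2 := hq.2 ⟨hP F, I_le_PG hF.1⟩ hle
  exact ⟨F, hF, le_antisymm h2 hle⟩

theorem ann_char {I : Ideal R} (w a : R) :
    a ∈ (⊥ : Submodule R (R ⧸ I)).colon {(Ideal.Quotient.mk I w : R ⧸ I)} ↔ a * w ∈ I := by
  rw [Submodule.mem_colon_singleton, Submodule.mem_bot]
  have h1 : a • (Ideal.Quotient.mk I w) = Ideal.Quotient.mk I (a * w) := rfl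
  rw [h1, Ideal.Quotient.eq_zero_iff_mem]

theorem ass_sub_min [IsNoetherianRing R]
    (hP : ∀ S : Finset (Fin d), (span (x '' ↑S) : Ideal R).IsPrime)
    (hX : ∀ (S : Finset (Fin d)) (j), j ∉ S → x j ∉ span (x '' ↑S)) :
    associatedPrimes R (R ⧸ (span ((fun s => ∏ i ∈ s, x i) '' T) : Ideal R)) ⊆
      (span ((fun s => ∏ i ∈ s, x i) '' T) : Ideal R).minimalPrimes := by
  set I : Ideal R := span ((fun s => ∏ i ∈ s, x i) '' T) with hI
  intro p hpa
  obtain ⟨hp, w', hw'⟩ := (_root_.isAssociatedPrime_iff).mp hpa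
  obtain ⟨w, rfl⟩ := Ideal.Quotient.mk_surjective w'
  have hmem : ∀ a, a ∈ p ↔ a * w ∈ I := by
    intro a
    rw [hw']
    exact ann_char w a
  have hwI : w ∉ I := by
    intro hw
    apply hp.ne_top
    rw [Ideal.eq_top_iff_one, hmem, one_mul]
    exact hw
  have hIp : I ≤ p := by
    intro a ha
    rw [hmem]
    exact Ideal.mul_mem_right _ _ ha
  obtain ⟨F, hF, hwF⟩ : ∃ F, MinCov T F ∧ w ∉ span (x '' ↑F) := by
    by_contra hc
    push_neg at hc
    exact hwI (mem_I_of_forall_minCov hP hX (fun F hF => hc F hF))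
  have hpF : p ≤ span (x '' ↑F) := by
    intro a ha
    have : a * w ∈ span (x '' ↑F) := I_le_PG hF.1 ((hmem a).mp ha)
    rcases (hP F).mem_or_mem this with h | h
    · exact h
    · exact absurd h hwF
  have hFmin := minCov_minimalPrimes (T := T) hP hX hF
  have : span (x '' ↑F) ≤ p := hFmin.2 ⟨hp, hIp⟩ hpF
  have heq : p = span (x '' ↑F) := le_antisymm hpF this
  rw [heq]
  exact hFmin

end CoverPrimes

section MinSubAss

variable [IsNoetherianRing R]

/-- Every minimal prime over a proper ideal of a Noetherian ring is associated. -/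
theorem min_sub_ass {I : Ideal R} (hI : I ≠ ⊤) :
    I.minimalPrimes ⊆ associatedPrimes R (R ⧸ I) := by
  rintro p ⟨⟨hp, hIp⟩, hpmin⟩
  classical
  -- the saturation of I at p
  have hmulmem : ∀ {s t : R}, s ∉ p → t ∉ p → s * t ∉ p := by
    intro s t hs ht hst
    rcases hp.mem_or_mem hst with h | h
    · exact hs h
    · exact ht h
  have hone : (1 : R) ∉ p := fun h => hp.ne_top ((Ideal.eq_top_iff_one _).mpr h)
  set I' : Ideal R :=
    { carrier := {y | ∃ s, s ∉ p ∧ s * y ∈ I}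
      add_mem' := by
        rintro a b ⟨s, hs, hsa⟩ ⟨t, ht, htb⟩
        refine ⟨s * t, hmulmem hs ht, ?_⟩
        have : s * t * (a + b) = t * (s * a) + s * (t * b) := by ring
        rw [this]
        exact I.add_mem (I.mul_mem_left t hsa) (I.mul_mem_left s htb)
      zero_mem' := ⟨1, hone, by rw [mul_zero]; exact I.zero_mem⟩
      smul_mem' := by
        rintro c a ⟨s, hs, hsa⟩
        refine ⟨s, hs, ?_⟩
        rw [smul_eq_mul]
        have : s * (c * a) = c * (s * a) := by ring
        rw [this]
        exact I.mul_mem_left c hsa } with hI'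
  have hmemI' : ∀ y, y ∈ I' ↔ ∃ s, s ∉ p ∧ s * y ∈ I := fun y => Iff.rfl
  have hII' : I ≤ I' := fun y hy => ⟨1, hone, by rwa [one_mul]⟩
  have hI'p : I' ≤ p := by
    rintro y ⟨s, hs, hsy⟩
    rcases hp.mem_or_mem (hIp hsy) with h | h
    · exact absurd h hs
    · exact h
  have hI'top : I' ≠ ⊤ := by
    intro h
    rw [Ideal.eq_top_iff_one] at h
    obtain ⟨s, hs, hs1⟩ := h
    rw [mul_one] at hs1
    exact hs (hIp hs1)
  -- every element of p has a power in I'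
  have hpow : ∀ a ∈ p, ∃ n : ℕ, a ^ n ∈ I' := by
    intro a ha
    set M : Submonoid R :=
      { carrier := {r | ∃ s, s ∉ p ∧ ∃ n : ℕ, r = s * a ^ n}
        one_mem' := ⟨1, hone, 0, by simp⟩
        mul_mem' := by
          rintro r r' ⟨s, hs, n, rfl⟩ ⟨s', hs', n', rfl⟩
          exact ⟨s * s', hmulmem hs hs', n + n', by ring⟩ } with hM
    by_cases hdis : Disjoint (I : Set R) (M : Set R)
    · exfalso
      obtain ⟨q, hqp, hIq, hqM⟩ := Ideal.exists_le_prime_disjoint I M hdis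
      have hqsubp : q ≤ p := by
        intro r hr
        by_contra hrp
        have hrM : r ∈ (M : Set R) := ⟨r, hrp, 0, by simp⟩
        exact Set.disjoint_left.mp hqM hr hrM
      have hpq : p ≤ q := hpmin ⟨hqp, hIq⟩ hqsubp
      have haM : a ∈ (M : Set R) := ⟨1, hone, 1, by simp⟩
      exact Set.disjoint_left.mp hqM (hpq ha) haM
    · rw [Set.not_disjoint_iff] at hdis
      obtain ⟨r, hrI, s, hs, n, rfl⟩ := hdis
      exact ⟨n, s, hs, hrI⟩
  -- I' is p-primary
  have hrad : I'.radical = p := by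
    apply le_antisymm
    · have : I'.radical ≤ p.radical := Ideal.radical_mono hI'p
      rwa [hp.radical] at this
    · intro a ha
      obtain ⟨n, hn⟩ := hpow a ha
      exact ⟨n, hn⟩
  have hprimary : I'.IsPrimary := by
    rw [Ideal.isPrimary_iff]
    constructor
    · exact hI'top
    · rintro a b ⟨s, hs, hsab⟩
      rw [hrad]
      by_cases hb : b ∈ p
      · exact Or.inr hb
      · refine Or.inl ⟨s * b, hmulmem hs hb, ?_⟩
        have : s * b * a = s * (a * b) := by ring
        rw [this]
        exact hsab
  have hass := associatedPrimes.eq_singleton_of_isPrimary hprimary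
  have hpass : IsAssociatedPrime p (R ⧸ I') := by
    have : p ∈ associatedPrimes R (R ⧸ I') := by
      rw [hass, ← hrad]
      exact rfl
    exact this
  obtain ⟨_, w', hw'⟩ := (_root_.isAssociatedPrime_iff).mp hpass
  obtain ⟨w, rfl⟩ := Ideal.Quotient.mk_surjective w'
  have hmemw : ∀ c, c ∈ p ↔ c * w ∈ I' := by
    intro c
    rw [hw']
    exact ann_char w c
  -- choose the finitely many generators of p
  obtain ⟨fs, hfs⟩ := IsNoetherian.noetherian p
  have hch : ∀ a : {a // a ∈ fs}, ∃ s, s ∉ p ∧ s * ((a : R) * w) ∈ I := by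
    rintro ⟨a, ha⟩
    have hap : a ∈ p := by
      rw [← hfs]
      exact subset_span ha
    exact (hmemw a).mp hap
  choose f hf1 hf2 using hch
  set sb : R := ∏ a ∈ fs.attach, f a with hsbdef
  have hsb : sb ∉ p := by
    intro hmem
    obtain ⟨a, _, hfa⟩ := (Ideal.IsPrime.prod_mem_iff (hp := hp)).mp hmem
    exact hf1 a hfa
  have hkey : ∀ c, c ∈ p ↔ c * (sb * w) ∈ I := by
    intro c
    constructor
    · intro hc
      rw [← hfs] at hc
      induction hc using Submodule.span_induction with
      | mem g hg =>
        have hdvd : f ⟨g, hg⟩ ∣ sb := Finset.dvd_prod_of_mem f (Finset.mem_attach fs ⟨g, hg⟩)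
        obtain ⟨t, ht⟩ := hdvd
        have : g * (sb * w) = t * (f ⟨g, hg⟩ * (g * w)) := by rw [ht]; ring
        rw [this]
        exact I.mul_mem_left t (hf2 ⟨g, hg⟩)
      | zero => rw [zero_mul]; exact I.zero_mem
      | add u v hu hv hu' hv' => rw [add_mul]; exact I.add_mem hu' hv'
      | smul r u hu hu' =>
        rw [smul_eq_mul, mul_assoc]
        exact I.mul_mem_left r hu'
    · intro hc
      have h1 : (c * sb) * w ∈ I' := by
        apply hII'
        have : c * sb * w = c * (sb * w) := by ring
        rw [this]
        exact hc
      have h2 : c * sb ∈ p := (hmemw _).mpr h1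
      rcases hp.mem_or_mem h2 with h | h
      · exact h
      · exact absurd h hsb
  refine (_root_.isAssociatedPrime_iff).mpr ⟨hp, Ideal.Quotient.mk I (sb * w), ?_⟩
  ext c
  rw [ann_char]
  exact hkey c

end MinSubAss

section Glue

variable [IsNoetherianRing R] {x : Fin d → R} {T : Set (Finset (Fin d))}

theorem symb_eq_iff_mid
    (hP : ∀ S : Finset (Fin d), (span (x '' ↑S) : Ideal R).IsPrime)
    (hX : ∀ (S : Finset (Fin d)) (j), j ∉ S → x j ∉ span (x '' ↑S))
    (k : ℕ) :
    ({y : R | ∃ s : R, (∀ p ∈ (span ((fun s => ∏ i ∈ s, x i) '' T) : Ideal R).minimalPrimes,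
        s ∉ p) ∧ s * y ∈ (span ((fun s => ∏ i ∈ s, x i) '' T) : Ideal R) ^ k} =
      (((span ((fun s => ∏ i ∈ s, x i) '' T) : Ideal R) ^ k : Ideal R) : Set R)) ↔
    associatedPrimes R (R ⧸ (span ((fun s => ∏ i ∈ s, x i) '' T) : Ideal R) ^ k) ⊆
      (span ((fun s => ∏ i ∈ s, x i) '' T) : Ideal R).minimalPrimes := by
  classical
  set I : Ideal R := span ((fun s => ∏ i ∈ s, x i) '' T) with hIdef
  constructor
  · -- set equality → Ass(R/I^k) ⊆ Min I
    intro hset P hPass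
    obtain ⟨hp, w', hw'⟩ := (_root_.isAssociatedPrime_iff).mp hPass
    obtain ⟨w, rfl⟩ := Ideal.Quotient.mk_surjective w'
    have hmem : ∀ a, a ∈ P ↔ a * w ∈ I ^ k := by
      intro a
      rw [hw']
      exact ann_char w a
    have hwIk : w ∉ I ^ k := by
      intro hw
      exact hp.ne_top ((Ideal.eq_top_iff_one _).mpr ((hmem 1).mpr (by rwa [one_mul])))
    have hIP : I ≤ P := by
      intro a ha
      have h1 : a ^ k ∈ P := (hmem _).mpr (Ideal.mul_mem_right _ _ (Ideal.pow_mem_pow ha k))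
      exact hp.mem_of_pow_mem k h1
    by_contra hPmin
    have hnle : ∀ F, MinCov T F → ¬ P ≤ span (x '' ↑F) := by
      intro F hF hle
      have h2 := (minCov_minimalPrimes hP hX hF).2 ⟨hp, hIP⟩ hle
      exact hPmin (le_antisymm hle h2 ▸ minCov_minimalPrimes (T := T) hP hX hF)
    set fsC : Finset (Finset (Fin d)) := Finset.univ.filter (fun F => MinCov T F) with hfsC
    have hnsub : ¬ ((P : Set R) ⊆ ⋃ F ∈ (fsC : Set (Finset (Fin d))),
        ↑(span (x '' ↑F) : Ideal R)) := by
      rw [Ideal.subset_union_prime (f := fun F : Finset (Fin d) => span (x '' ↑F)) ∅ ∅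
        (fun F _ _ _ => hP F)]
      rintro ⟨F, hFmem, hle⟩
      exact hnle F (Finset.mem_filter.mp hFmem).2 hle
    obtain ⟨a, haP, haU⟩ := Set.not_subset.mp hnsub
    have hsmin : ∀ p ∈ I.minimalPrimes, a ∉ p := by
      intro q hq haq
      obtain ⟨F, hF, rfl⟩ := minimalPrimes_eq_minCov hP hX hq
      apply haU
      refine Set.mem_biUnion ?_ haq
      show F ∈ (fsC : Set (Finset (Fin d)))
      simp only [hfsC, Finset.coe_filter, Finset.mem_univ, true_and, Set.mem_setOf_eq]
      exact hF
    have hwmem : w ∈ {y : R | ∃ s : R, (∀ p ∈ I.minimalPrimes, s ∉ p) ∧ s * y ∈ I ^ k} :=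
      ⟨a, hsmin, (hmem a).mp haP⟩
    rw [hset] at hwmem
    exact hwIk hwmem
  · -- Ass(R/I^k) ⊆ Min I → set equality
    intro hmid
    apply Set.Subset.antisymm
    · rintro y ⟨s, hs, hsy⟩
      by_contra hy
      have hy' : y ∉ I ^ k := fun h => hy h
      have hne : (Ideal.Quotient.mk (I ^ k) y) ≠ 0 := by
        rw [Ne, Ideal.Quotient.eq_zero_iff_mem]
        exact hy'
      obtain ⟨P, hPass, hannP⟩ := exists_le_isAssociatedPrime_of_isNoetherianRing R _ hne
      have hsP : s ∈ P := hannP ((ann_char y s).mpr hsy)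
      exact hs P (hmid hPass) hsP
    · intro y hy
      refine ⟨1, ?_, by rwa [one_mul]⟩
      intro p hp h1
      exact hp.1.1.ne_top ((Ideal.eq_top_iff_one _).mpr h1)

end Glue

end SP14



theorem stmt_14 {R : Type*} [CommRing R] [IsNoetherianRing R] {d : ℕ} (x : Fin d → R)
    (hreg : RingTheory.Sequence.IsRegular R (List.ofFn x))
    (hjac : ∀ i, x i ∈ Ideal.jacobson (⊥ : Ideal R))
    (hprime : (Ideal.span (Set.range x)).IsPrime)
    (I : Ideal R) (hIproper : I ≠ ⊤)
    (hsf : ∃ T : Set (Finset (Fin d)), I = Ideal.span ((fun s => ∏ i ∈ s, x i) '' T))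
    (k : ℕ) (hk : 1 ≤ k) :
    {y : R | ∃ s : R, (∀ p ∈ I.minimalPrimes, s ∉ p) ∧ s * y ∈ I ^ k} =
        ((I ^ k : Ideal R) : Set R) ↔
      associatedPrimes R (R ⧸ I ^ k) ⊆ associatedPrimes R (R ⧸ I) := by
  obtain ⟨T, rfl⟩ := hsf
  have hw : SP14.Wseq (⊥ : Ideal R) (List.ofFn x) := by
    have h1 : RingTheory.Sequence.IsWeaklyRegular R ([] ++ List.ofFn x) := by
      rw [List.nil_append]
      exact hreg.toIsWeaklyRegular
    have := SP14.wseq_of_isWeaklyRegular (List.ofFn x) [] h1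
    rwa [Ideal.ofList_nil] at this
  have hP : ∀ S : Finset (Fin d), (Ideal.span (x '' ↑S) : Ideal R).IsPrime :=
    fun S => SP14.PS_prime hw hjac hprime S
  have hX : ∀ (S : Finset (Fin d)) (j), j ∉ S → x j ∉ Ideal.span (x '' ↑S) :=
    fun S j h => SP14.PS_not_mem hw hjac hprime S h
  refine (SP14.symb_eq_iff_mid hP hX k).trans ⟨fun hmid => hmid.trans ?_, fun hrhs =>
    hrhs.trans (SP14.ass_sub_min hP hX)⟩
  exact SP14.min_sub_ass hIproper
end

section
/- Let R be a commutative Noetherian ring, x_1,...,x_d a regular R-sequence in the Jacobson radical of R, with p = (x_{i_1},...,x_{i_s})R prime for some subset of indices. Then for every k ≥ 1 and every monomial m = x_1^{e_1}···x_d^{e_d}, m ∈ p^k if and only if e_{i_1} + ... + e_{i_s} ≥ k. -/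
set_option linter.unusedSectionVars false

open MvPolynomial

section Aux

variable {R : Type*} [CommRing R] {ν : Type*} [DecidableEq ν]

lemma aux_prod_pow_mem {I : Ideal R} (t : Finset ν) (f : ν → R) (μ : ν → ℕ)
    (hf : ∀ i ∈ t, f i ∈ I) :
    (∏ i ∈ t, f i ^ μ i) ∈ I ^ (∑ i ∈ t, μ i) := by
  classical
  revert hf
  induction t using Finset.induction with
  | empty => intro _; simp
  | @insert a t hat ih =>
    intro hf
    rw [Finset.prod_insert hat, Finset.sum_insert hat, pow_add]
    exact Ideal.mul_mem_mul (Ideal.pow_mem_pow (hf _ (Finset.mem_insert_self _ _)) _)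
      (ih fun i hi => hf _ (Finset.mem_insert_of_mem hi))

variable (y : ν → R)

/-- ideal generated by the `y i`, `i ∈ s`. -/
def qI (s : Finset ν) : Ideal R := Ideal.span (y '' s)

lemma mem_qI {s : Finset ν} {i : ν} (hi : i ∈ s) : y i ∈ qI y s :=
  Ideal.subset_span ⟨i, by simpa using hi, rfl⟩

lemma qI_mono {s t : Finset ν} (h : s ⊆ t) : qI y s ≤ qI y t :=
  Ideal.span_mono (Set.image_mono (by exact_mod_cast h))

lemma eval_mem_pow {s : Finset ν} {d : ℕ} {F : MvPolynomial ν R}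
    (hv : ∀ μ ∈ F.support, (μ.support : Set ν) ⊆ s)
    (hF : F.IsHomogeneous d) : eval y F ∈ (qI y s) ^ d := by
  rw [eval_eq]
  refine Ideal.sum_mem _ fun μ hμ => ?_
  have hdeg : μ.degree = d := by
    have := hF (MvPolynomial.mem_support_iff.mp hμ)
    rw [Finsupp.degree_eq_weight_one]; exact this
  have : (∏ i ∈ μ.support, y i ^ μ i) ∈ (qI y s) ^ d := by
    rw [← hdeg]
    exact aux_prod_pow_mem _ _ _ (fun i hi => mem_qI y (by exact_mod_cast hv μ hμ hi))
  exact Ideal.mul_mem_left _ _ this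

lemma eval_mem_pow_succ_of_coeff_mem {s : Finset ν} {d : ℕ} {F : MvPolynomial ν R}
    (hv : ∀ μ ∈ F.support, (μ.support : Set ν) ⊆ s)
    (hF : F.IsHomogeneous d) (hc : ∀ μ, F.coeff μ ∈ qI y s) :
    eval y F ∈ (qI y s) ^ (d + 1) := by
  rw [eval_eq, pow_succ']
  refine Ideal.sum_mem _ fun μ hμ => ?_
  have hdeg : μ.degree = d := by
    have := hF (MvPolynomial.mem_support_iff.mp hμ)
    rw [Finsupp.degree_eq_weight_one]; exact this
  refine Ideal.mul_mem_mul (hc μ) ?_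
  rw [← hdeg]
  exact aux_prod_pow_mem _ _ _ (fun i hi => mem_qI y (by exact_mod_cast hv μ hμ hi))

lemma aux_degree_single (i : ν) (n : ℕ) : (Finsupp.single i n).degree = n := by
  rcases eq_or_ne n 0 with rfl | h
  · simp [Finsupp.degree]
  · exact Finsupp.degree_single i n

lemma aux_degree_add (f g : ν →₀ ℕ) : (f + g).degree = f.degree + g.degree := by
  simp [Finsupp.degree_eq_weight_one, map_add]

lemma exists_homogeneous_of_mem_pow {s : Finset ν} : ∀ {d : ℕ} {z : R},
    z ∈ (qI y s) ^ d →
    ∃ F : MvPolynomial ν R, (∀ μ ∈ F.support, (μ.support : Set ν) ⊆ s) ∧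
      F.IsHomogeneous d ∧ eval y F = z := by
  intro d
  induction d with
  | zero =>
    intro z _
    refine ⟨C z, ?_, isHomogeneous_C _ _, eval_C _⟩
    intro μ hμ
    have hμ0 : μ = 0 := by
      by_contra h
      exact (MvPolynomial.mem_support_iff.mp hμ) (by rw [coeff_C, if_neg (Ne.symm h)])
    subst hμ0; simp
  | succ d ih =>
    intro z hz
    rw [pow_succ] at hz
    refine Submodule.mul_induction_on hz ?_ ?_
    · intro m hm a ha
      obtain ⟨P, hPv, hPh, hPe⟩ := ih hm
      have ha' : a ∈ Ideal.span (Set.range fun i : (↑s : Set ν) => y ↑i) := by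
        rwa [← Set.image_eq_range]
      obtain ⟨c, hc⟩ := (Submodule.mem_span_range_iff_exists_fun R).mp ha'
      set A : MvPolynomial ν R :=
        ∑ i : (↑s : Set ν), monomial (Finsupp.single (i : ν) 1) (c i) with hA
      have hAv : ∀ μ ∈ A.support, (μ.support : Set ν) ⊆ s := by
        intro μ hμ
        obtain ⟨i, _, hi⟩ := Finset.mem_biUnion.mp (MvPolynomial.support_sum hμ)
        have := MvPolynomial.support_monomial_subset hi
        rcases Finset.mem_singleton.mp this with rfl
        intro j hj
        have hj' : j ∈ (Finsupp.single (i : ν) 1).support := hj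
        have := Finsupp.support_single_subset hj'
        simp only [Finset.mem_singleton] at this
        subst this
        exact_mod_cast i.2
      have hAh : A.IsHomogeneous 1 :=
        IsHomogeneous.sum _ _ _ fun i _ =>
          isHomogeneous_monomial _ (aux_degree_single _ _)
      have hAe : eval y A = a := by
        rw [hA, map_sum]
        rw [← hc]
        refine Finset.sum_congr rfl fun i _ => ?_
        rw [eval_monomial, Finsupp.prod_single_index (by simp), pow_one, smul_eq_mul]
      refine ⟨P * A, ?_, hPh.mul hAh, by rw [map_mul, hPe, hAe]⟩
      intro μ hμ
      have := MvPolynomial.support_mul _ _ hμ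
      obtain ⟨μ₁, h₁, μ₂, h₂, rfl⟩ := Finset.mem_add.mp this
      intro j hj
      rcases Finset.mem_union.mp (Finsupp.support_add (by exact_mod_cast hj)) with h | h
      exacts [hPv μ₁ h₁ h, hAv μ₂ h₂ h]
    · rintro u v ⟨F₁, h1v, h1h, h1e⟩ ⟨F₂, h2v, h2h, h2e⟩
      exact ⟨F₁ + F₂, fun μ hμ => by
        rcases Finset.mem_union.mp (MvPolynomial.support_add hμ) with h | h
        exacts [h1v μ h, h2v μ h], h1h.add h2h, by rw [map_add, h1e, h2e]⟩

end Aux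

section More

variable {R : Type*} [CommRing R] {ν : Type*} [DecidableEq ν] (y : ν → R)

/-- elements of `q^(d+1)` are values of homogeneous degree-`d` polynomials with
coefficients in `q`. -/
lemma exists_homogeneous_coeff_mem_of_mem_pow_succ {s : Finset ν} {d : ℕ} {z : R}
    (hz : z ∈ (qI y s) ^ (d + 1)) :
    ∃ K : MvPolynomial ν R, (∀ μ ∈ K.support, (μ.support : Set ν) ⊆ s) ∧
      K.IsHomogeneous d ∧ (∀ μ, K.coeff μ ∈ qI y s) ∧ eval y K = z := by
  rw [pow_succ'] at hz
  refine Submodule.mul_induction_on hz ?_ ?_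
  · intro a ha m hm
    obtain ⟨P, hPv, hPh, hPe⟩ := exists_homogeneous_of_mem_pow y hm
    refine ⟨C a * P, ?_, by simpa using (isHomogeneous_C ν a).mul hPh,
      fun μ => by rw [coeff_C_mul]; exact Ideal.mul_mem_right _ _ ha,
      by rw [map_mul, eval_C, hPe]⟩
    intro μ hμ
    have : μ ∈ P.support := by
      by_contra h
      have h0 : P.coeff μ = 0 := MvPolynomial.notMem_support_iff.mp h
      exact (MvPolynomial.mem_support_iff.mp hμ) (by rw [coeff_C_mul, h0, mul_zero])
    exact hPv μ this
  · rintro u v ⟨F₁, h1v, h1h, h1c, h1e⟩ ⟨F₂, h2v, h2h, h2c, h2e⟩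
    refine ⟨F₁ + F₂, fun μ hμ => ?_, h1h.add h2h,
      fun μ => by rw [coeff_add]; exact Ideal.add_mem _ (h1c μ) (h2c μ),
      by rw [map_add, h1e, h2e]⟩
    rcases Finset.mem_union.mp (MvPolynomial.support_add hμ) with h | h
    exacts [h1v μ h, h2v μ h]

/-- The "climbing" lemma: if `t` is regular mod `q` and the quasi-regularity
conclusion holds for `q`, then `t` is regular mod every power of `q`. -/
lemma climb {s : Finset ν}
    (T : ∀ (d : ℕ) (F : MvPolynomial ν R), (∀ μ ∈ F.support, (μ.support : Set ν) ⊆ s) →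
      F.IsHomogeneous d → eval y F ∈ (qI y s) ^ (d + 1) → ∀ μ, F.coeff μ ∈ qI y s)
    {t : R} (ht : ∀ z, t * z ∈ qI y s → z ∈ qI y s) :
    ∀ (d : ℕ) (z : R), t * z ∈ (qI y s) ^ d → z ∈ (qI y s) ^ d := by
  intro d
  induction d with
  | zero => intro z _; simp
  | succ d ih =>
    intro z hz
    have hz' : z ∈ (qI y s) ^ d := ih z (Ideal.pow_le_pow_right (Nat.le_succ d) hz)
    obtain ⟨P, hPv, hPh, hPe⟩ := exists_homogeneous_of_mem_pow y hz'
    have hCP : eval y (C t * P) ∈ (qI y s) ^ (d + 1) := by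
      rw [map_mul, eval_C, hPe]; exact hz
    have hCPv : ∀ μ ∈ (C t * P).support, (μ.support : Set ν) ⊆ s := by
      intro μ hμ
      refine hPv μ ?_
      by_contra h
      exact (MvPolynomial.mem_support_iff.mp hμ)
        (by rw [coeff_C_mul, MvPolynomial.notMem_support_iff.mp h, mul_zero])
    have hCPh : (C t * P).IsHomogeneous d := by simpa using (isHomogeneous_C ν t).mul hPh
    have hc : ∀ μ, P.coeff μ ∈ qI y s := by
      intro μ
      have := T d (C t * P) hCPv hCPh hCP μ
      rw [coeff_C_mul] at this
      exact ht _ this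
    rw [← hPe]
    exact eval_mem_pow_succ_of_coeff_mem y hPv hPh hc

end More

section WR

open RingTheory.Sequence

variable {R : Type*} [CommRing R]

lemma wr_prefix {l₁ l₂ : List R} (h : IsWeaklyRegular R (l₁ ++ l₂)) :
    IsWeaklyRegular R l₁ := by
  constructor
  intro i hi
  have hi' : i < (l₁ ++ l₂).length := by rw [List.length_append]; omega
  have H := h.regular_mod_prev i hi'
  rw [List.getElem_append_left hi, List.take_append_of_le_length (le_of_lt hi)] at H
  exact H

lemma reg_of_wr_append {l : List R} {t : R} (h : IsWeaklyRegular R (l ++ [t])) :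
    ∀ z : R, t * z ∈ Ideal.ofList l → z ∈ Ideal.ofList l := by
  have hlen : l.length < (l ++ [t]).length := by simp
  have H := h.regular_mod_prev l.length hlen
  rw [List.getElem_concat_length rfl] at H
  rw [List.take_left] at H
  intro z hz
  have hmk : (Submodule.Quotient.mk (t * z) :
      R ⧸ (Ideal.ofList l • ⊤ : Submodule R R)) = 0 := by
    rw [Submodule.Quotient.mk_eq_zero]
    rw [smul_eq_mul, Ideal.mul_top]
    exact hz
  have h2 : t • (Submodule.Quotient.mk z :
      R ⧸ (Ideal.ofList l • ⊤ : Submodule R R)) = t • (0 : _) := by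
    rw [smul_zero, ← Submodule.Quotient.mk_smul, smul_eq_mul]
    exact hmk
  have h3 := (Submodule.Quotient.mk_eq_zero _).mp (H h2)
  rwa [smul_eq_mul, Ideal.mul_top] at h3

end WR

section Main

open RingTheory.Sequence

variable {R : Type*} [CommRing R] {ν : Type*} [DecidableEq ν] (y : ν → R)

lemma coeff_mem_aux {q : Ideal R} {F : MvPolynomial ν R}
    (key : ∀ μ ∈ F.support, μ = 0) (he : eval y F ∈ q) : ∀ μ, F.coeff μ ∈ q := by
  have hsub : F.support ⊆ {0} := fun μ hμ => Finset.mem_singleton.mpr (key μ hμ)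
  have heval : eval y F = F.coeff 0 := by
    rw [eval_eq, Finset.sum_subset hsub (fun μ _ hμ => by
      rw [MvPolynomial.notMem_support_iff.mp hμ, zero_mul])]
    simp
  intro μ
  by_cases hμ : μ ∈ F.support
  · have := key μ hμ
    subst this
    rw [← heval]
    exact he
  · rw [MvPolynomial.notMem_support_iff.mp hμ]
    exact q.zero_mem

theorem quasi_reg (s : Finset ν) :
    (∀ l : List ν, l.Nodup → (∀ i ∈ l, i ∈ s) → IsWeaklyRegular R (l.map y)) →
    ∀ (d : ℕ) (F : MvPolynomial ν R), (∀ μ ∈ F.support, (μ.support : Set ν) ⊆ s) →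
      F.IsHomogeneous d → eval y F ∈ (qI y s) ^ (d + 1) → ∀ μ, F.coeff μ ∈ qI y s := by
  induction s using Finset.induction with
  | empty =>
    intro _ d F hv _ he
    have key : ∀ μ ∈ F.support, μ = 0 := by
      intro μ hμ
      have h1 : (μ.support : Set ν) ⊆ (↑(∅ : Finset ν) : Set ν) := hv μ hμ
      have h2 : μ.support = ∅ := by
        rw [← Finset.subset_empty]
        exact_mod_cast h1
      exact Finsupp.support_eq_empty.mp h2
    have hle : qI y ∅ ^ (d + 1) ≤ qI y ∅ := by
      conv_rhs => rw [← pow_one (qI y ∅)]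
      exact Ideal.pow_le_pow_right (by omega)
    exact coeff_mem_aux y key (hle he)
  | @insert a s' ha ih =>
    intro HREG
    have HREG' : ∀ l : List ν, l.Nodup → (∀ i ∈ l, i ∈ s') → IsWeaklyRegular R (l.map y) :=
      fun l h1 h2 => HREG l h1 fun i hi => Finset.mem_insert_of_mem (h2 i hi)
    have T' := ih HREG'
    have ht : ∀ z, y a * z ∈ qI y s' → z ∈ qI y s' := by
      have hn : (s'.toList ++ [a]).Nodup := by
        rw [List.nodup_append]
        refine ⟨Finset.nodup_toList s', List.nodup_singleton a, ?_⟩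
        intro i hi j hj hij
        rw [List.mem_singleton] at hj
        subst hj
        subst hij
        exact ha (Finset.mem_toList.mp hi)
      have hmem : ∀ i ∈ s'.toList ++ [a], i ∈ insert a s' := by
        intro i hi
        rcases List.mem_append.mp hi with h | h
        · exact Finset.mem_insert_of_mem (Finset.mem_toList.mp h)
        · rw [List.mem_singleton] at h
          subst h
          exact Finset.mem_insert_self _ _
      have hwr := HREG _ hn hmem
      rw [List.map_append] at hwr
      have hofl : Ideal.ofList (s'.toList.map y) = qI y s' := by
        unfold Ideal.ofList qI
        congr 1
        ext r
        simp only [Set.mem_setOf_eq, List.mem_map, Finset.mem_toList, Set.mem_image,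
          Finset.mem_coe]
      have := reg_of_wr_append (l := s'.toList.map y) (t := y a) (by simpa using hwr)
      rw [hofl] at this
      exact this
    have hya : y a ∈ qI y (insert a s') := mem_qI y (Finset.mem_insert_self _ _)
    have hq'q : qI y s' ≤ qI y (insert a s') := qI_mono y (Finset.subset_insert _ _)
    intro d
    induction d using Nat.strong_induction_on with
    | _ d IH =>
    intro F hv hF he
    match d, IH with
    | 0, _ =>
      have key : ∀ μ ∈ F.support, μ = 0 := by
        intro μ hμ
        have := hF (MvPolynomial.mem_support_iff.mp hμ)
        replace this : μ.degree = 0 := by rw [Finsupp.degree_eq_weight_one]; exact this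
        exact (Finsupp.degree_eq_zero_iff μ).mp this
      exact coeff_mem_aux y key (by rw [pow_one] at he; exact he)
    | (e+1), IH =>
      obtain ⟨K, hKv, hKh, hKc, hKe⟩ := exists_homogeneous_coeff_mem_of_mem_pow_succ y he
      set F₁ := F - K with hF₁def
      suffices h1 : ∀ μ, F₁.coeff μ ∈ qI y (insert a s') by
        intro μ
        have h2 := h1 μ
        rw [hF₁def, coeff_sub] at h2
        have h3 := Ideal.add_mem _ h2 (hKc μ)
        rwa [sub_add_cancel] at h3
      have hF₁v : ∀ μ ∈ F₁.support, (μ.support : Set ν) ⊆ ↑(insert a s') := by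
        intro μ hμ
        rcases Finset.mem_union.mp (MvPolynomial.support_sub _ F K hμ) with h | h
        exacts [hv μ h, hKv μ h]
      have hF₁h : F₁.IsHomogeneous (e + 1) := hF.sub hKh
      have hF₁e : eval y F₁ = 0 := by rw [hF₁def, map_sub, hKe, sub_self]
      have hdeg : ∀ μ ∈ F₁.support, μ.degree = e + 1 := by
        intro μ hμ
        have := hF₁h (MvPolynomial.mem_support_iff.mp hμ)
        rw [Finsupp.degree_eq_weight_one]; exact this
      set S : Finset (ν →₀ ℕ) := F₁.support.filter (fun μ => μ a = 0) with hS
      set Sc : Finset (ν →₀ ℕ) := F₁.support.filter (fun μ => ¬ μ a = 0) with hSc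
      set G : MvPolynomial ν R := ∑ μ ∈ S, monomial μ (F₁.coeff μ) with hG
      set H : MvPolynomial ν R :=
        ∑ μ ∈ Sc, monomial (μ - Finsupp.single a 1) (F₁.coeff μ) with hH
      have hle : ∀ μ ∈ Sc, Finsupp.single a 1 ≤ μ := by
        intro μ hμ
        rw [Finsupp.single_le_iff, Nat.one_le_iff_ne_zero]
        exact (Finset.mem_filter.mp hμ).2
      have hsplit : F₁ = G + X a * H := by
        conv_lhs => rw [F₁.as_sum]
        rw [← Finset.sum_filter_add_sum_filter_not F₁.support (fun μ => μ a = 0)]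
        congr 1
        rw [hH, Finset.mul_sum]
        refine Finset.sum_congr rfl fun μ hμ => ?_
        rw [X, monomial_mul, one_mul, add_tsub_cancel_of_le (hle μ hμ)]
      -- properties of H
      have hHv : ∀ μ ∈ H.support, (μ.support : Set ν) ⊆ ↑(insert a s') := by
        intro μ hμ
        obtain ⟨μ', hμ', hμ''⟩ := Finset.mem_biUnion.mp (MvPolynomial.support_sum hμ)
        rcases Finset.mem_singleton.mp (MvPolynomial.support_monomial_subset hμ'') with rfl
        intro j hj
        have hj' : j ∈ (μ' - Finsupp.single a 1).support := hj
        have : j ∈ μ'.support := Finsupp.support_tsub hj'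
        exact hF₁v μ' (Finset.mem_of_mem_filter _ hμ') this
      have hHh : H.IsHomogeneous e := by
        refine IsHomogeneous.sum _ _ _ fun μ hμ => isHomogeneous_monomial _ ?_
        have h1 : (μ - Finsupp.single a 1) + Finsupp.single a 1 = μ :=
          tsub_add_cancel_of_le (hle μ hμ)
        have h2 := aux_degree_add (μ - Finsupp.single a 1) (Finsupp.single a 1)
        rw [h1, aux_degree_single] at h2
        have h3 := hdeg μ (Finset.mem_of_mem_filter _ hμ)
        omega
      -- properties of G
      have hGsupp : G.support ⊆ S := by
        intro μ hμ
        obtain ⟨μ', hμ', hμ''⟩ := Finset.mem_biUnion.mp (MvPolynomial.support_sum hμ)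
        rcases Finset.mem_singleton.mp (MvPolynomial.support_monomial_subset hμ'') with rfl
        exact hμ'
      have hGv : ∀ μ ∈ G.support, (μ.support : Set ν) ⊆ ↑s' := by
        intro μ hμ
        have hμS := hGsupp hμ
        have hμa : μ a = 0 := (Finset.mem_filter.mp hμS).2
        intro j hj
        have hj' : j ∈ μ.support := hj
        have hja : j ≠ a := by
          intro h
          subst h
          exact (Finsupp.mem_support_iff.mp hj') hμa
        have := hF₁v μ (Finset.mem_of_mem_filter _ hμS) hj
        rcases Finset.mem_insert.mp (by exact_mod_cast this) with h | h
        · exact absurd h hja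
        · exact_mod_cast h
      have hGh : G.IsHomogeneous (e + 1) :=
        IsHomogeneous.sum _ _ _ fun μ hμ =>
          isHomogeneous_monomial _ (hdeg μ (Finset.mem_of_mem_filter _ hμ))
      -- the equation
      have heq : eval y G + y a * eval y H = 0 := by
        rw [← eval_X (f := y) (n := a), ← map_mul, ← map_add, ← hsplit]
        exact hF₁e
      have hGmem : eval y G ∈ (qI y s') ^ (e + 1) := eval_mem_pow y hGv hGh
      have hclimb : eval y H ∈ (qI y s') ^ (e + 1) := by
        refine climb y T' ht (e + 1) _ ?_
        have : y a * eval y H = - eval y G := by linear_combination heq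
        rw [this]
        exact neg_mem hGmem
      -- coefficients of H
      have hHc : ∀ μ, H.coeff μ ∈ qI y (insert a s') := by
        refine IH e (Nat.lt_succ_self e) H hHv hHh ?_
        exact Ideal.pow_right_mono hq'q _ hclimb
      -- coefficients of G
      obtain ⟨P, hPv, hPh, hPe⟩ := exists_homogeneous_of_mem_pow y hclimb
      have hQc : ∀ μ, (G + C (y a) * P).coeff μ ∈ qI y s' := by
        refine T' (e + 1) (G + C (y a) * P) ?_ ?_ ?_
        · intro μ hμ
          rcases Finset.mem_union.mp (MvPolynomial.support_add hμ) with h | h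
          · exact hGv μ h
          · refine hPv μ ?_
            by_contra hc
            exact (MvPolynomial.mem_support_iff.mp h)
              (by rw [coeff_C_mul, MvPolynomial.notMem_support_iff.mp hc, mul_zero])
        · exact hGh.add (by simpa using (isHomogeneous_C ν (y a)).mul hPh)
        · have : eval y (G + C (y a) * P) = 0 := by
            rw [map_add, map_mul, eval_C, hPe]
            exact heq
          rw [this]
          exact Ideal.zero_mem _
      have hGc : ∀ μ, G.coeff μ ∈ qI y (insert a s') := by
        intro μ
        have h1 := hQc μ
        rw [coeff_add, coeff_C_mul] at h1
        have h2 : y a * P.coeff μ ∈ qI y (insert a s') :=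
          Ideal.mul_mem_right _ _ hya
        have h3 := Ideal.sub_mem _ (hq'q h1) h2
        rwa [add_sub_cancel_right] at h3
      -- conclude
      intro μ
      rw [hsplit, coeff_add]
      by_cases hμa : μ a = 0
      · have h0 : (X a * H).coeff μ = 0 := by
          rw [coeff_X_mul', if_neg]
          rw [Finsupp.mem_support_iff]
          exact fun h => h hμa
        rw [h0, add_zero]
        exact hGc μ
      · have h0 : G.coeff μ = 0 := by
          rw [MvPolynomial.notMem_support_iff.mp]
          intro hμ
          exact hμa (Finset.mem_filter.mp (hGsupp hμ)).2
        rw [h0, zero_add, coeff_X_mul', if_pos (Finsupp.mem_support_iff.mpr hμa)]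
        exact hHc _

end Main

section Final

open RingTheory.Sequence

variable {R : Type*} [CommRing R] {ν : Type*} [DecidableEq ν]

lemma ofList_toList_map (y : ν → R) (s : Finset ν) :
    Ideal.ofList (s.toList.map y) = qI y s := by
  unfold Ideal.ofList qI
  congr 1
  ext r
  simp only [Set.mem_setOf_eq, List.mem_map, Finset.mem_toList, Set.mem_image, Finset.mem_coe]

end Final

open RingTheory.Sequence in
theorem stmt_16 {R : Type*} [CommRing R] [IsNoetherianRing R] {d : ℕ} (x : Fin d → R)
    (hreg : RingTheory.Sequence.IsRegular R (List.ofFn x))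
    (hjac : ∀ i, x i ∈ Ideal.jacobson (⊥ : Ideal R))
    {s : ℕ} (ι : Fin s → Fin d) (hι : Function.Injective ι)
    (p : Ideal R) (hp : p = Ideal.span (Set.range fun j => x (ι j))) (hprime : p.IsPrime)
    (k : ℕ) (hk : 1 ≤ k) (e : Fin d → ℕ) :
    (∏ i, x i ^ e i) ∈ p ^ k ↔ k ≤ ∑ j, e (ι j) := by
  classical
  subst hp
  set t : Finset (Fin d) := Finset.univ.image ι with htdef
  have hpt : Ideal.span (Set.range fun j => x (ι j)) = qI x t := by
    unfold qI
    congr 1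
    rw [htdef, Finset.coe_image, Finset.coe_univ, Set.image_univ]
    rw [← Set.range_comp]
    rfl
  rw [hpt] at hprime ⊢
  -- all nodup lists of indices give weakly regular sequences
  have hjac' : ∀ r ∈ List.ofFn x, r ∈ (Module.annihilator R R).jacobson := by
    intro r hr
    obtain ⟨i, rfl⟩ := Set.mem_range.mp ((List.mem_ofFn' _ _).mp hr)
    exact Ideal.jacobson_mono bot_le (hjac i)
  have hWR : ∀ l : List (Fin d), l.Nodup → IsWeaklyRegular R (l.map x) := by
    intro l hl
    have hsub : List.Subperm l (List.finRange d) :=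
      List.subperm_of_subset hl (fun i _ => List.mem_finRange i)
    obtain ⟨l', hperm, hsl⟩ := hsub
    have hle : (↑l' : Multiset (Fin d)) ≤ ↑(List.finRange d) := hsl.subperm
    obtain ⟨m, hm⟩ := Multiset.le_iff_exists_add.mp hle
    have hperm2 : (l' ++ m.toList).Perm (List.finRange d) := by
      rw [← Multiset.coe_eq_coe]
      show ((l' ++ m.toList : List (Fin d)) : Multiset (Fin d)) = ↑(List.finRange d)
      rw [hm, ← Multiset.coe_toList m, Multiset.coe_add, Multiset.coe_toList]
    have hfull : IsWeaklyRegular R (List.ofFn x) := hreg.toIsWeaklyRegular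
    have hperm3 : (List.ofFn x).Perm ((l' ++ m.toList).map x) := by
      rw [List.ofFn_eq_map]
      exact (hperm2.map x).symm
    have h1 : IsWeaklyRegular R ((l' ++ m.toList).map x) :=
      hfull.of_perm_of_subset_jacobson_annihilator hperm3 hjac'
    rw [List.map_append] at h1
    have h2 : IsWeaklyRegular R (l'.map x) := wr_prefix h1
    refine h2.of_perm_of_subset_jacobson_annihilator (hperm.map x) ?_
    intro r hr
    obtain ⟨i, _, rfl⟩ := List.mem_map.mp hr
    exact Ideal.jacobson_mono bot_le (hjac i)
  have hT := quasi_reg x t (fun l hl _ => hWR l hl)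
  -- x i ∉ q for i outside t
  have hxp : ∀ i : Fin d, i ∉ t → x i ∉ qI x t := by
    intro i hit hmem
    have hn : (t.toList ++ [i]).Nodup := by
      rw [List.nodup_append]
      refine ⟨Finset.nodup_toList t, List.nodup_singleton i, ?_⟩
      intro j hj _ hj' hji
      rw [List.mem_singleton] at hj'
      subst hj'
      subst hji
      exact hit (Finset.mem_toList.mp hj)
    have h1 := hWR _ hn
    rw [List.map_append] at h1
    have h2 := reg_of_wr_append (l := t.toList.map x) (t := x i) (by simpa using h1)
    rw [ofList_toList_map] at h2
    have h3 := h2 1 (by rwa [mul_one])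
    exact hprime.ne_top ((Ideal.eq_top_iff_one _).mpr h3)
  have hsum : (∑ i ∈ t, e i) = ∑ j, e (ι j) :=
    Finset.sum_image fun a _ b _ h => hι h
  have hsplitprod : (∏ i, x i ^ e i) =
      (∏ i ∈ t, x i ^ e i) * ∏ i ∈ tᶜ, x i ^ e i :=
    (Finset.prod_mul_prod_compl t _).symm
  constructor
  · -- hard direction
    intro hm
    by_contra hlt
    push_neg at hlt
    have hF1k : (∑ i ∈ t, e i) + 1 ≤ k := by omega
    -- the cofactor is not in q
    have hu : (∏ i ∈ tᶜ, x i ^ e i) ∉ qI x t := by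
      intro hmem
      haveI := hprime
      obtain ⟨i, hi, hxi⟩ := (Ideal.IsPrime.prod_mem_iff).mp hmem
      rcases Nat.eq_zero_or_pos (e i) with h0 | h0
      · rw [h0, pow_zero] at hxi
        exact hprime.ne_top ((Ideal.eq_top_iff_one _).mpr hxi)
      · exact hxp i (Finset.mem_compl.mp hi) (hprime.mem_of_pow_mem _ hxi)
    set μ₀ : Fin d →₀ ℕ := ∑ i ∈ t, Finsupp.single i (e i) with hμ₀
    have hμ₀app : ∀ i ∈ t, μ₀ i = e i := by
      intro j hj
      rw [hμ₀, Finset.sum_apply']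
      rw [Finset.sum_eq_single_of_mem j hj
        (fun i _ hne => Finsupp.single_eq_of_ne' hne)]
      exact Finsupp.single_eq_same
    have hμ₀supp : μ₀.support ⊆ t := by
      intro i hi
      by_contra hit
      have : μ₀ i = 0 := by
        rw [hμ₀, Finset.sum_apply']
        exact Finset.sum_eq_zero fun j hj =>
          Finsupp.single_eq_of_ne' (fun h => hit (h ▸ hj))
      exact (Finsupp.mem_support_iff.mp hi) this
    have hμ₀deg : μ₀.degree = ∑ i ∈ t, e i := by
      have h1 : μ₀.degree = ∑ i ∈ t, (Finsupp.single i (e i)).degree := by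
        rw [Finsupp.degree_eq_weight_one, hμ₀, map_sum]
      rw [h1]
      exact Finset.sum_congr rfl fun i _ => aux_degree_single i (e i)
    set u : R := ∏ i ∈ tᶜ, x i ^ e i with hu_def
    set F₀ : MvPolynomial (Fin d) R := monomial μ₀ u with hF₀
    have hF₀v : ∀ μ ∈ F₀.support, (μ.support : Set (Fin d)) ⊆ ↑t := by
      intro μ hμ
      rcases Finset.mem_singleton.mp (MvPolynomial.support_monomial_subset hμ) with rfl
      exact_mod_cast hμ₀supp
    have hF₀h : F₀.IsHomogeneous (∑ i ∈ t, e i) :=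
      isHomogeneous_monomial _ hμ₀deg
    have hF₀e : eval x F₀ = ∏ i, x i ^ e i := by
      rw [hF₀, eval_monomial]
      have hprod : (μ₀.prod fun i k => x i ^ k) = ∏ i ∈ t, x i ^ e i := by
        rw [Finsupp.prod]
        rw [Finset.prod_subset hμ₀supp (fun i _ hnot => by
          rw [Finsupp.notMem_support_iff.mp hnot, pow_zero])]
        exact Finset.prod_congr rfl fun i hi => by rw [hμ₀app i hi]
      rw [hprod, hsplitprod, mul_comm]
    have hmem : eval x F₀ ∈ (qI x t) ^ ((∑ i ∈ t, e i) + 1) := by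
      rw [hF₀e]
      exact Ideal.pow_le_pow_right hF1k hm
    have := hT _ F₀ hF₀v hF₀h hmem μ₀
    rw [hF₀, coeff_monomial, if_pos rfl] at this
    exact hu this
  · -- easy direction
    intro hk'
    have h1 : (∏ i ∈ t, x i ^ e i) ∈ (qI x t) ^ (∑ i ∈ t, e i) :=
      aux_prod_pow_mem t x e fun i hi => mem_qI x hi
    have h2 : (qI x t) ^ (∑ i ∈ t, e i) ≤ (qI x t) ^ k :=
      Ideal.pow_le_pow_right (by omega)
    rw [hsplitprod]
    exact Ideal.mul_mem_right _ _ (h2 h1)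
end
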